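/- For all positive integers m, n, the identity Σ_{i ∣ m} Σ_{j ∣ n} gcd(i,j) = Σ_{d ∣ gcd(m,n)} φ(d)·τ(m/d)·τ(n/d) holds. -/

import Mathlib

open Finset

lemma card_filter_dvd_divisors {d m : ℕ} (hd : d ∣ m) (hm : m ≠ 0) :
    (m.divisors.filter (fun i => d ∣ i)).card = (m / d).divisors.card := by
  have hd0 : 0 < d := Nat.pos_of_ne_zero (by rintro rfl; exact hm (Nat.zero_dvd.mp hd))
  have : (m / d).divisors.map ⟨(· * d), fun a b h =>
      Nat.eq_of_mul_eq_mul_right hd0 h⟩ = m.divisors.filter (fun i => d ∣ i) := by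
    ext a
    simp only [mem_map, Nat.mem_divisors, mem_filter, Function.Embedding.coeFn_mk]
    constructor
    · rintro ⟨b, ⟨hb, hb0⟩, rfl⟩
      refine ⟨⟨?_, hm⟩, Dvd.intro_left b rfl⟩
      have := mul_dvd_mul_right hb d
      rwa [Nat.div_mul_cancel hd] at this
    · rintro ⟨⟨ham, _⟩, had⟩
      refine ⟨a / d, ⟨?_, ?_⟩, Nat.div_mul_cancel had⟩
      · rw [Nat.dvd_div_iff_mul_dvd hd, Nat.mul_div_cancel' had]; exact ham
      · exact (Nat.div_ne_zero_iff).mpr ⟨hd0.ne', Nat.le_of_dvd (Nat.pos_of_ne_zero hm) hd⟩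
  rw [← this, card_map]

theorem gcd_double_sum_identity (m n : ℕ) (hm : 0 < m) (hn : 0 < n) :
    (∑ i ∈ m.divisors, ∑ j ∈ n.divisors, Nat.gcd i j) =
      ∑ d ∈ (Nat.gcd m n).divisors,
        Nat.totient d * (m / d).divisors.card * (n / d).divisors.card := by
  have key : ∀ i ∈ m.divisors, ∀ j ∈ n.divisors,
      Nat.gcd i j = ∑ d ∈ (Nat.gcd m n).divisors,
        if d ∣ i ∧ d ∣ j then Nat.totient d else 0 := by
    intro i hi j hj
    have hi0 : i ≠ 0 := (Nat.pos_of_mem_divisors hi).ne'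
    rw [Nat.mem_divisors] at hi hj
    have hset : (Nat.gcd i j).divisors =
        (Nat.gcd m n).divisors.filter (fun d => d ∣ i ∧ d ∣ j) := by
      ext d
      simp only [mem_filter, Nat.mem_divisors, Nat.dvd_gcd_iff]
      constructor
      · rintro ⟨⟨hdi, hdj⟩, -⟩
        exact ⟨⟨⟨hdi.trans hi.1, hdj.trans hj.1⟩, Nat.gcd_ne_zero_left hm.ne'⟩, hdi, hdj⟩
      · rintro ⟨-, hdi, hdj⟩
        exact ⟨⟨hdi, hdj⟩, Nat.gcd_ne_zero_left hi0⟩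
    rw [← Nat.sum_totient (Nat.gcd i j), hset, Finset.sum_filter]
  calc (∑ i ∈ m.divisors, ∑ j ∈ n.divisors, Nat.gcd i j)
      = ∑ i ∈ m.divisors, ∑ j ∈ n.divisors, ∑ d ∈ (Nat.gcd m n).divisors,
          if d ∣ i ∧ d ∣ j then Nat.totient d else 0 :=
        Finset.sum_congr rfl fun i hi => Finset.sum_congr rfl fun j hj => key i hi j hj
    _ = ∑ i ∈ m.divisors, ∑ d ∈ (Nat.gcd m n).divisors, ∑ j ∈ n.divisors,
          if d ∣ i ∧ d ∣ j then Nat.totient d else 0 :=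
        Finset.sum_congr rfl fun i _ => Finset.sum_comm
    _ = ∑ d ∈ (Nat.gcd m n).divisors, ∑ i ∈ m.divisors, ∑ j ∈ n.divisors,
          if d ∣ i ∧ d ∣ j then Nat.totient d else 0 := Finset.sum_comm
    _ = ∑ d ∈ (Nat.gcd m n).divisors,
        Nat.totient d * (m / d).divisors.card * (n / d).divisors.card := by
      refine Finset.sum_congr rfl fun d hd => ?_
      rw [Nat.mem_divisors] at hd
      have hdm : d ∣ m := hd.1.trans (Nat.gcd_dvd_left m n)
      have hdn : d ∣ n := hd.1.trans (Nat.gcd_dvd_right m n)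
      have expand : ∀ i ∈ m.divisors, ∀ j ∈ n.divisors,
          (if d ∣ i ∧ d ∣ j then Nat.totient d else 0) =
          (if d ∣ i then Nat.totient d else 0) * (if d ∣ j then 1 else 0) := by
        intro i _ j _
        by_cases h1 : d ∣ i <;> by_cases h2 : d ∣ j <;> simp [h1, h2]
      calc (∑ i ∈ m.divisors, ∑ j ∈ n.divisors,
              if d ∣ i ∧ d ∣ j then Nat.totient d else 0)
          = (∑ i ∈ m.divisors, if d ∣ i then Nat.totient d else 0) *
            (∑ j ∈ n.divisors, if d ∣ j then 1 else 0) := by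
            rw [Finset.sum_mul_sum]
            exact Finset.sum_congr rfl fun i hi =>
              Finset.sum_congr rfl fun j hj => expand i hi j hj
        _ = Nat.totient d * (m / d).divisors.card * (n / d).divisors.card := by
            rw [← Finset.sum_filter, ← Finset.sum_filter, Finset.sum_const,
              Finset.sum_const, card_filter_dvd_divisors hdm hm.ne',
              card_filter_dvd_divisors hdn hn.ne', smul_eq_mul, smul_eq_mul, mul_one]
            ring
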